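/- Let g : ℝ^d → ℝ be measurable, let p ≥ 1 be an integer, and suppose sup_{x∈ℝ^d} |x_j^(2p) g(x)| ≤ B for each coordinate j = 1,…,d. Then for every ε ∈ (0,1], ∫_{‖x‖ ≥ ε} g(x)² dx ≤ C · B² · ε^(−8p) for a constant C depending only on d and p, provided 2p > d. -/

import Mathlib

open MeasureTheory

/-- localization estimate.  If |x_j^(2p) g(x)| ≤ B for every
coordinate j and 2p > d, then ∫_{‖x‖ ≥ ε} g² ≤ C B² ε^(−8p) for a constant C
depending only on d and p. -/
theorem stmt_16 (d p : ℕ) (hp : 1 ≤ p) (hdp : d < 2 * p) :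
    ∃ C : ℝ, 0 < C ∧ ∀ g : EuclideanSpace ℝ (Fin d) → ℝ, Measurable g →
      ∀ B : ℝ, (∀ j : Fin d, ∀ x : EuclideanSpace ℝ (Fin d),
          |x j ^ (2 * p) * g x| ≤ B) →
        ∀ ε : ℝ, ε ∈ Set.Ioc (0 : ℝ) 1 →
          ∫ x in {x : EuclideanSpace ℝ (Fin d) | ε ≤ ‖x‖}, g x ^ 2 ≤
            C * B ^ 2 * ε ^ (-(8 * (p : ℝ))) := by
  set E := EuclideanSpace ℝ (Fin d)
  -- integrability of (1+‖x‖)^{-4p}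
  have hdr : (Module.finrank ℝ E : ℝ) < ((4 * p : ℕ) : ℝ) := by
    rw [finrank_euclideanSpace_fin]
    push_cast
    have : (d : ℝ) < 2 * p := by exact_mod_cast hdp
    linarith
  have hI0 : Integrable (fun x : E => ((1 : ℝ) + ‖x‖) ^ (-((4 * p : ℕ) : ℝ))) :=
    integrable_one_add_norm hdr
  have hI : Integrable (fun x : E => (((1 : ℝ) + ‖x‖) ^ (4 * p))⁻¹) := by
    refine hI0.congr (Filter.Eventually.of_forall fun x => ?_)
    show ((1:ℝ) + ‖x‖) ^ (-((4 * p : ℕ) : ℝ)) = (((1:ℝ) + ‖x‖) ^ (4 * p))⁻¹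
    rw [Real.rpow_neg (by positivity), Real.rpow_natCast]
  set I : ℝ := ∫ x : E, (((1 : ℝ) + ‖x‖) ^ (4 * p))⁻¹ with hIdef
  have hInn : 0 ≤ I := integral_nonneg fun x => by positivity
  refine ⟨(d : ℝ) ^ (2 * p) * 2 ^ (4 * p) * I + 1, by positivity, ?_⟩
  intro g hg B hB ε hε
  obtain ⟨hε0, hε1⟩ := hε
  set S : Set E := {x : E | ε ≤ ‖x‖} with hSdef
  have hSm : MeasurableSet S := measurableSet_le measurable_const measurable_norm
  set A2 : ℝ := (d : ℝ) ^ (2 * p) * 2 ^ (4 * p) * B ^ 2 * (ε ^ (8 * p))⁻¹ with hA2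
  have hA2nn : 0 ≤ A2 := by positivity
  set φ : E → ℝ := fun x => A2 * (((1 : ℝ) + ‖x‖) ^ (4 * p))⁻¹ with hφdef
  have hφint : Integrable φ := hI.const_mul A2
  have hφnn : ∀ x : E, 0 ≤ φ x := fun x => by positivity
  -- pointwise bound on S
  have hpt : ∀ x ∈ S, g x ^ 2 ≤ φ x := by
    intro x hx
    have hx' : ε ≤ ‖x‖ := hx
    have hxn : 0 < ‖x‖ := lt_of_lt_of_le hε0 hx'
    -- find maximizing coordinate
    have hd0 : 0 < d := by
      rcases Nat.eq_zero_or_pos d with h | h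
      · exfalso
        subst h
        have : ‖x‖ = 0 := by
          rw [EuclideanSpace.norm_eq]
          simp
        rw [this] at hxn; exact lt_irrefl 0 hxn
      · exact h
    have : Nonempty (Fin d) := ⟨⟨0, hd0⟩⟩
    obtain ⟨j, -, hj⟩ := Finset.exists_max_image (Finset.univ : Finset (Fin d))
      (fun i => (x i) ^ 2) ⟨Classical.arbitrary (Fin d), Finset.mem_univ _⟩
    have h1 : ‖x‖ ^ 2 ≤ (d : ℝ) * (x j) ^ 2 := by
      have hne : ‖x‖ ^ 2 = ∑ i, (x i) ^ 2 := by
        rw [EuclideanSpace.norm_eq, Real.sq_sqrt (by positivity)]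
        simp [Real.norm_eq_abs, sq_abs]
      rw [hne]
      calc ∑ i, (x i) ^ 2 ≤ Finset.univ.card • ((x j) ^ 2) :=
            Finset.sum_le_card_nsmul _ _ _ fun i _ => hj i (Finset.mem_univ i)
        _ = (d : ℝ) * (x j) ^ 2 := by
            simp [nsmul_eq_mul]
    have h2 : ‖x‖ ^ (2 * p) ≤ (d : ℝ) ^ p * (x j) ^ (2 * p) := by
      have := pow_le_pow_left₀ (by positivity) h1 p
      calc ‖x‖ ^ (2 * p) = (‖x‖ ^ 2) ^ p := by rw [← pow_mul]
        _ ≤ ((d : ℝ) * (x j) ^ 2) ^ p := this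
        _ = (d : ℝ) ^ p * (x j) ^ (2 * p) := by rw [mul_pow, ← pow_mul]
    have hxj : (0:ℝ) ≤ (x j) ^ (2 * p) := by
      rw [pow_mul]; positivity
    have h3 : |g x| * ‖x‖ ^ (2 * p) ≤ (d : ℝ) ^ p * B := by
      calc |g x| * ‖x‖ ^ (2 * p) ≤ |g x| * ((d : ℝ) ^ p * (x j) ^ (2 * p)) :=
            mul_le_mul_of_nonneg_left h2 (abs_nonneg _)
        _ = (d : ℝ) ^ p * |x j ^ (2 * p) * g x| := by
            rw [abs_mul, abs_of_nonneg hxj]; ring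
        _ ≤ (d : ℝ) ^ p * B :=
            mul_le_mul_of_nonneg_left (hB j x) (by positivity)
    have h4 : g x ^ 2 * ‖x‖ ^ (4 * p) ≤ (d : ℝ) ^ (2 * p) * B ^ 2 := by
      have := mul_self_le_mul_self (by positivity) h3
      calc g x ^ 2 * ‖x‖ ^ (4 * p)
          = (|g x| * ‖x‖ ^ (2 * p)) * (|g x| * ‖x‖ ^ (2 * p)) := by
            rw [← sq_abs (g x), show 4 * p = 2 * p + 2 * p by ring, pow_add]
            ring
        _ ≤ ((d : ℝ) ^ p * B) * ((d : ℝ) ^ p * B) := this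
        _ = (d : ℝ) ^ (2 * p) * B ^ 2 := by
            rw [show 2 * p = p + p by ring, pow_add]; ring
    -- key elementary inequality
    have h6 : ε ^ (8 * p) * ((1 : ℝ) + ‖x‖) ^ (4 * p) ≤ 2 ^ (4 * p) * ‖x‖ ^ (4 * p) := by
      rcases le_total ‖x‖ 1 with h | h
      · have ha : ε ^ (8 * p) ≤ ‖x‖ ^ (4 * p) := by
          calc ε ^ (8 * p) ≤ ε ^ (4 * p) :=
                pow_le_pow_of_le_one hε0.le hε1 (by omega)
            _ ≤ ‖x‖ ^ (4 * p) := pow_le_pow_left₀ hε0.le hx' _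
        have hb : ((1:ℝ) + ‖x‖) ^ (4 * p) ≤ 2 ^ (4 * p) :=
          pow_le_pow_left₀ (by positivity) (by linarith) _
        calc ε ^ (8 * p) * ((1:ℝ) + ‖x‖) ^ (4 * p) ≤ ‖x‖ ^ (4 * p) * 2 ^ (4 * p) :=
              mul_le_mul ha hb (by positivity) (by positivity)
          _ = 2 ^ (4 * p) * ‖x‖ ^ (4 * p) := by ring
      · have ha : ε ^ (8 * p) ≤ 1 := pow_le_one₀ hε0.le hε1
        have hb : ((1:ℝ) + ‖x‖) ^ (4 * p) ≤ 2 ^ (4 * p) * ‖x‖ ^ (4 * p) := by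
          calc ((1:ℝ) + ‖x‖) ^ (4 * p) ≤ (2 * ‖x‖) ^ (4 * p) :=
                pow_le_pow_left₀ (by positivity) (by linarith) _
            _ = 2 ^ (4 * p) * ‖x‖ ^ (4 * p) := by rw [mul_pow]
        calc ε ^ (8 * p) * ((1:ℝ) + ‖x‖) ^ (4 * p) ≤ 1 * (2 ^ (4 * p) * ‖x‖ ^ (4 * p)) :=
              mul_le_mul ha hb (by positivity) (by norm_num)
          _ = 2 ^ (4 * p) * ‖x‖ ^ (4 * p) := by ring
    -- combine
    have hx4 : (0:ℝ) < ‖x‖ ^ (4 * p) := by positivity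
    have hden : (0:ℝ) < ε ^ (8 * p) * ((1:ℝ) + ‖x‖) ^ (4 * p) := by positivity
    have h5 : g x ^ 2 ≤ (d : ℝ) ^ (2 * p) * B ^ 2 / ‖x‖ ^ (4 * p) :=
      (le_div_iff₀ hx4).2 h4
    have h7 : (d : ℝ) ^ (2 * p) * B ^ 2 / ‖x‖ ^ (4 * p) ≤ φ x := by
      have hφx : φ x = (d : ℝ) ^ (2 * p) * B ^ 2 * 2 ^ (4 * p) /
          (ε ^ (8 * p) * ((1:ℝ) + ‖x‖) ^ (4 * p)) := by
        rw [hφdef, hA2]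
        field_simp
      rw [hφx, div_le_div_iff₀ hx4 hden]
      calc (d : ℝ) ^ (2 * p) * B ^ 2 * (ε ^ (8 * p) * ((1:ℝ) + ‖x‖) ^ (4 * p))
          ≤ (d : ℝ) ^ (2 * p) * B ^ 2 * (2 ^ (4 * p) * ‖x‖ ^ (4 * p)) :=
            mul_le_mul_of_nonneg_left h6 (by positivity)
        _ = (d : ℝ) ^ (2 * p) * B ^ 2 * 2 ^ (4 * p) * ‖x‖ ^ (4 * p) := by ring
    exact h5.trans h7
  -- integrability of g^2 on S
  have hg2m : AEStronglyMeasurable (fun x => g x ^ 2) (volume.restrict S) :=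
    ((hg.pow_const 2).aestronglyMeasurable)
  have hg2int : IntegrableOn (fun x => g x ^ 2) S := by
    refine Integrable.mono' (hφint.restrict (s := S)) hg2m ?_
    rw [ae_restrict_iff' hSm]
    exact Filter.Eventually.of_forall fun x hx => by
      rw [Real.norm_eq_abs, abs_of_nonneg (sq_nonneg _)]
      exact hpt x hx
  have step1 : ∫ x in S, g x ^ 2 ≤ ∫ x in S, φ x :=
    setIntegral_mono_on hg2int (hφint.restrict) hSm hpt
  have step2 : ∫ x in S, φ x ≤ ∫ x : E, φ x :=
    setIntegral_le_integral hφint (Filter.Eventually.of_forall hφnn)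
  have step3 : ∫ x : E, φ x = A2 * I := by
    rw [hφdef, hIdef, integral_const_mul]
  have hrw : ε ^ (-(8 * (p : ℝ))) = (ε ^ (8 * p))⁻¹ := by
    rw [← Real.rpow_natCast ε (8 * p), ← Real.rpow_neg hε0.le]
    push_cast
    ring_nf
  calc ∫ x in S, g x ^ 2 ≤ A2 * I := by
        rw [← step3]; exact step1.trans step2
    _ ≤ ((d : ℝ) ^ (2 * p) * 2 ^ (4 * p) * I + 1) * B ^ 2 * ε ^ (-(8 * (p : ℝ))) := by
        rw [hrw, hA2]
        nlinarith [sq_nonneg B, inv_nonneg.2 (pow_nonneg hε0.le (8 * p)), hInn,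
          mul_nonneg (sq_nonneg B) (inv_nonneg.2 (pow_nonneg hε0.le (8 * p)))]
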